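/- arXiv:2108.04041 — 6 statements merged into one kernel-verified Lean document; each statement's English description precedes it below -/
import Mathlib

section
/- Let a1, b1, c1, a2, b2, c2 ∈ ℂ and set p1 = (a1·v² + b1·v + c1)·y² + v·y and p2 = (a2·v² + b2·v + c2)·y² in ℂ[v,y] ⊂ S. Then for ALL polynomials m1, m2 ∈ ℂ[v,y] ⊂ S, n1, n2 ∈ ℂ[v] ⊂ S and all constants l1, l2 ∈ ℂ, the derivations E1 = (−v²y² + p1·t + m1·t²)∂_y + ((1/2)·v²·t + n1·t²)∂_v + l1·t²·∂_t and E2 = (−y² + p2·t + m2·t²)∂_y + ((1/2)·t + n2·t²)∂_v + l2·t²·∂_t of S satisfy [E1,E2] ≢ 0 (mod t³); in fact ([E1,E2])(v) does not lie in the ideal generated by t³. (This is the computational core of the theorem that the action of Aut(𝔽₂) on the second Hirzebruch surface 𝔽₂ extends to its formally semi-universal deformation only up to first order.) -/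
open MvPolynomial

noncomputable section

/-- `S = ℂ[v,y,t]` with `v = X 0`, `y = X 1`, `t = X 2`. -/
abbrev S : Type := MvPolynomial (Fin 3) ℂ

/-- The variable `v`. -/ def V : S := X 0
/-- The variable `y`. -/ def Y : S := X 1
/-- The variable `t`. -/ def T : S := X 2

/-- The derivation `f ∂_y + g ∂_v + h ∂_t` of `S = ℂ[v,y,t]`, determined by
`y ↦ f`, `v ↦ g`, `t ↦ h`. -/
def der (f g h : S) : Derivation ℂ S S :=
  MvPolynomial.mkDerivation ℂ ![g, f, h]

/-- The inclusion `ℂ[v,y] ⊂ S` (where in `ℂ[v,y]` the variable `X 0` is `v`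
and `X 1` is `y`). -/
def ι2 : MvPolynomial (Fin 2) ℂ →ₐ[ℂ] S := aeval ![V, Y]

/-- The inclusion `ℂ[v] ⊂ S`. -/
def ι1 : Polynomial ℂ →ₐ[ℂ] S := Polynomial.aeval V

/-- `D ≡ D' (mod t³)`: the difference sends `y`, `v`, `t` into the ideal `(t³)`. -/
def ModT3 (D D' : Derivation ℂ S S) : Prop :=
  ∀ i : Fin 3, (D - D') (X i) ∈ Ideal.span {T ^ 3}

/-- Evaluation `v ↦ C X`, `y ↦ 0`, `t ↦ X` into `ℂ[v][t]`. -/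
def ψ : S →ₐ[ℂ] Polynomial (Polynomial ℂ) :=
  aeval ![Polynomial.C Polynomial.X, 0, Polynomial.X]

@[simp] lemma der_V (f g h : S) : der f g h V = g := by
  simp [der, V, mkDerivation_X]

@[simp] lemma der_T (f g h : S) : der f g h T = h := by
  simp [der, T, mkDerivation_X]

@[simp] lemma der_ι1 (f g h : S) (n : Polynomial ℂ) :
    der f g h (ι1 n) = ι1 n.derivative * g := by
  rw [ι1, Derivation.map_aeval]
  simp [ι1, smul_eq_mul, mul_comm]

@[simp] lemma der_C (f g h : S) (a : ℂ) : der f g h (C a) = 0 :=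
  derivation_C _ a

@[simp] lemma ψ_V : ψ V = Polynomial.C Polynomial.X := by simp [ψ, V]
@[simp] lemma ψ_T : ψ T = Polynomial.X := by simp [ψ, T]
@[simp] lemma ψ_C (a : ℂ) : ψ (C a) = Polynomial.C (Polynomial.C a) := by
  simp [ψ]

@[simp] lemma ψ_ι1 (n : Polynomial ℂ) : ψ (ι1 n) = Polynomial.C n := by
  rw [ι1, ← Polynomial.aeval_algHom_apply ψ V n, ψ_V,
    show (Polynomial.C Polynomial.X : Polynomial (Polynomial ℂ)) =
      Polynomial.CAlgHom (R := ℂ) Polynomial.X from rfl,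
    Polynomial.aeval_algHom_apply (Polynomial.CAlgHom (R := ℂ) (A := Polynomial ℂ))
      Polynomial.X n]
  simp [Polynomial.CAlgHom]

/-- The explicit value of `⁅E1, E2⁆ v` after the evaluation `ψ`. -/
lemma bracket_eval (f1 f2 : S) (n1 n2 : Polynomial ℂ) (l1 l2 : ℂ) :
    ψ (⁅der f1 (C (1 / 2 : ℂ) * V ^ 2 * T + ι1 n1 * T ^ 2) (C l1 * T ^ 2),
       der f2 (C (1 / 2 : ℂ) * T + ι1 n2 * T ^ 2) (C l2 * T ^ 2)⁆ V) =
    Polynomial.C (Polynomial.C (1 / 2 : ℂ) *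
        (Polynomial.C l1 - Polynomial.C (2 : ℂ) * Polynomial.C (1 / 2 : ℂ) * Polynomial.X -
          Polynomial.C l2 * Polynomial.X ^ 2)) *
      Polynomial.X ^ 2 +
    (Polynomial.C (Polynomial.C (1 / 2 : ℂ) * Polynomial.X ^ 2 * n2.derivative
        + Polynomial.C (2 * l1) * n2
        - Polynomial.C (2 : ℂ) * Polynomial.C (1 / 2 : ℂ) * Polynomial.X * n2
        - Polynomial.C (1 / 2 : ℂ) * n1.derivative - Polynomial.C (2 * l2) * n1)
      + Polynomial.C (n1 * n2.derivative - n1.derivative * n2) * Polynomial.X) *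
      Polynomial.X ^ 3 := by
  rw [Derivation.commutator_apply, der_V, der_V]
  simp only [Derivation.leibniz, Derivation.leibniz_pow, map_add, map_mul, map_sub, map_smul,
    der_V, der_T, der_ι1, der_C, smul_eq_mul, map_pow, map_nsmul, nsmul_eq_mul,
    ψ_V, ψ_T, ψ_C, ψ_ι1, mul_zero, zero_mul, add_zero, zero_add, map_ofNat, Nat.cast_ofNat,
    map_one, Polynomial.C_1]
  ring

lemma coeff_two_eq_zero_of_mem (p : S) (hp : p ∈ Ideal.span {T ^ 3}) :
    (ψ p).coeff 2 = 0 := by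
  rw [Ideal.mem_span_singleton] at hp
  obtain ⟨q, rfl⟩ := hp
  rw [map_mul, map_pow, ψ_T, mul_comm, Polynomial.coeff_mul_X_pow']
  simp

theorem no_second_order_extension (a1 b1 c1 a2 b2 c2 : ℂ)
    (p1 p2 : MvPolynomial (Fin 2) ℂ)
    (hp1 : p1 = (C a1 * X 0 ^ 2 + C b1 * X 0 + C c1) * X 1 ^ 2 + X 0 * X 1)
    (hp2 : p2 = (C a2 * X 0 ^ 2 + C b2 * X 0 + C c2) * X 1 ^ 2) :
    ∀ (m1 m2 : MvPolynomial (Fin 2) ℂ) (n1 n2 : Polynomial ℂ) (l1 l2 : ℂ),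
    ∀ E1 E2 : Derivation ℂ S S,
    E1 = der (-V ^ 2 * Y ^ 2 + ι2 p1 * T + ι2 m1 * T ^ 2)
        (C (1 / 2 : ℂ) * V ^ 2 * T + ι1 n1 * T ^ 2) (C l1 * T ^ 2) →
    E2 = der (-Y ^ 2 + ι2 p2 * T + ι2 m2 * T ^ 2)
        (C (1 / 2 : ℂ) * T + ι1 n2 * T ^ 2) (C l2 * T ^ 2) →
    ¬ ModT3 ⁅E1, E2⁆ 0 ∧ ⁅E1, E2⁆ V ∉ Ideal.span {T ^ 3} := by
  intro m1 m2 n1 n2 l1 l2 E1 E2 hE1 hE2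
  subst hE1 hE2
  have key := bracket_eval (-V ^ 2 * Y ^ 2 + ι2 p1 * T + ι2 m1 * T ^ 2)
    (-Y ^ 2 + ι2 p2 * T + ι2 m2 * T ^ 2) n1 n2 l1 l2
  have hne : (ψ (⁅der (-V ^ 2 * Y ^ 2 + ι2 p1 * T + ι2 m1 * T ^ 2)
      (C (1 / 2 : ℂ) * V ^ 2 * T + ι1 n1 * T ^ 2) (C l1 * T ^ 2),
      der (-Y ^ 2 + ι2 p2 * T + ι2 m2 * T ^ 2)
      (C (1 / 2 : ℂ) * T + ι1 n2 * T ^ 2) (C l2 * T ^ 2)⁆ V)).coeff 2 ≠ 0 := by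
    rw [key]
    intro h
    rw [Polynomial.coeff_add, Polynomial.coeff_C_mul, Polynomial.coeff_X_pow,
      Polynomial.coeff_mul_X_pow'] at h
    norm_num at h
    have := congrArg (fun q => Polynomial.coeff q 1) h
    simp [Polynomial.coeff_sub, mul_sub] at this
  have h2 : ⁅der (-V ^ 2 * Y ^ 2 + ι2 p1 * T + ι2 m1 * T ^ 2)
      (C (1 / 2 : ℂ) * V ^ 2 * T + ι1 n1 * T ^ 2) (C l1 * T ^ 2),
      der (-Y ^ 2 + ι2 p2 * T + ι2 m2 * T ^ 2)
      (C (1 / 2 : ℂ) * T + ι1 n2 * T ^ 2) (C l2 * T ^ 2)⁆ V ∉ Ideal.span {T ^ 3} :=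
    fun hm => hne (coeff_two_eq_zero_of_mem _ hm)
  refine ⟨fun h => h2 ?_, h2⟩
  have := h 0
  simpa [V] using this

end
end

section
/- Let F1, F2 ∈ S be arbitrary polynomials, n1, n2 ∈ ℂ[v] ⊂ S and l1, l2 ∈ ℂ. Set E1 = F1·∂_y + ((1/2)·v²·t + n1·t²)∂_v + l1·t²·∂_t and E2 = F2·∂_y + ((1/2)·t + n2·t²)∂_v + l2·t²·∂_t. Then ([E1,E2])(v) is congruent to −(1/2)·v·t² + (l1/2)·t² − (l2/2)·v²·t² modulo the ideal of S generated by t³ (and this polynomial is a nonzero element of S/(t³) for every choice of l1, l2). -/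
open MvPolynomial

noncomputable section

theorem bracket_on_v_mod_t3 (F1 F2 : S) (n1 n2 : Polynomial ℂ) (l1 l2 : ℂ)
    (E1 E2 : Derivation ℂ S S)
    (hE1 : E1 = der F1 (C (1 / 2 : ℂ) * V ^ 2 * T + ι1 n1 * T ^ 2) (C l1 * T ^ 2))
    (hE2 : E2 = der F2 (C (1 / 2 : ℂ) * T + ι1 n2 * T ^ 2) (C l2 * T ^ 2)) :
    ⁅E1, E2⁆ V -
        (-(C (1 / 2 : ℂ)) * V * T ^ 2 + C (l1 / 2) * T ^ 2 - C (l2 / 2) * V ^ 2 * T ^ 2) ∈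
      Ideal.span {T ^ 3} ∧
    -(C (1 / 2 : ℂ)) * V * T ^ 2 + C (l1 / 2) * T ^ 2 - C (l2 / 2) * V ^ 2 * T ^ 2 ∉
      Ideal.span {T ^ 3} := by
  constructor
  · -- membership part
    have h1v : E1 V = C (1 / 2 : ℂ) * V ^ 2 * T + ι1 n1 * T ^ 2 := by
      rw [hE1]; simp [der, V, mkDerivation_X]
    have h2v : E2 V = C (1 / 2 : ℂ) * T + ι1 n2 * T ^ 2 := by
      rw [hE2]; simp [der, V, mkDerivation_X]
    have h1t : E1 T = C l1 * T ^ 2 := by rw [hE1]; simp [der, T, mkDerivation_X]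
    have h2t : E2 T = C l2 * T ^ 2 := by rw [hE2]; simp [der, T, mkDerivation_X]
    have derC : ∀ (D : Derivation ℂ S S) (a : ℂ), D (C a) = 0 := by
      intro D a
      rw [← MvPolynomial.algebraMap_eq]; exact D.map_algebraMap a
    have key : ∀ (D : Derivation ℂ S S), D V ∈ Ideal.span {T} → ∀ n : Polynomial ℂ,
        D (ι1 n) ∈ Ideal.span {T} := by
      intro D hD n
      induction n using Polynomial.induction_on with
      | C a =>
        simp [ι1, Polynomial.aeval_C, ← MvPolynomial.algebraMap_eq, Derivation.map_algebraMap]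
      | add p q hp hq => rw [map_add, map_add]; exact Ideal.add_mem _ hp hq
      | monomial m c ih =>
        have : (ι1 : Polynomial ℂ →ₐ[ℂ] S) (Polynomial.C c * Polynomial.X ^ (m+1))
            = ι1 (Polynomial.C c * Polynomial.X ^ m) * V := by
          simp [ι1, pow_succ, mul_assoc]
        rw [this, Derivation.leibniz]
        exact Ideal.add_mem _ (Submodule.smul_mem _ _ hD) (Submodule.smul_mem _ _ ih)
    obtain ⟨c1, hc1⟩ := Ideal.mem_span_singleton'.mp (key E1 (by
      rw [h1v, Ideal.mem_span_singleton']; exact ⟨C (1/2 : ℂ) * V ^ 2 + ι1 n1 * T, by ring⟩) n2)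
    obtain ⟨c2, hc2⟩ := Ideal.mem_span_singleton'.mp (key E2 (by
      rw [h2v, Ideal.mem_span_singleton']; exact ⟨C (1/2 : ℂ) + ι1 n2 * T, by ring⟩) n1)
    rw [Derivation.commutator_apply, h2v, h1v]
    simp only [map_add, Derivation.leibniz, Derivation.leibniz_pow, h1v, h2v, h1t, h2t, derC,
      ← hc1, ← hc2, smul_eq_mul, nsmul_eq_mul, smul_smul, mul_zero, zero_mul, add_zero, zero_add,
      Nat.cast_ofNat, smul_zero]
    rw [Ideal.mem_span_singleton']
    refine ⟨c1 - c2 - V * ι1 n2 + C l1 * ι1 n2 * 2 - C l2 * ι1 n1 * 2, ?_⟩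
    have hl1 : (C (l1 / 2) : S) = C (1/2 : ℂ) * C l1 := by
      rw [show l1/2 = (1/2)*l1 by ring, C_mul]
    have hl2 : (C (l2 / 2) : S) = C (1/2 : ℂ) * C l2 := by
      rw [show l2/2 = (1/2)*l2 by ring, C_mul]
    have h2C : (C (1/2 : ℂ) : S) * 2 = 1 := by
      rw [show (2:S) = C (2:ℂ) from (map_ofNat C 2).symm, ← C_mul]; norm_num
    rw [hl1, hl2]
    linear_combination (V * ι1 n2 * T^3 + V * T^2 * C (1/2 : ℂ)) * h2C
  · -- non-membership part
    set q0 : Polynomial ℂ := Polynomial.C (l1/2) - Polynomial.C (1/2) * Polynomial.X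
        - Polynomial.C (l2/2) * Polynomial.X ^ 2 with hq0
    have hq0ne : q0 ≠ 0 := by
      intro h
      have := congrArg (fun p => Polynomial.coeff p 1) h
      simp [hq0, Polynomial.coeff_one] at this
    obtain ⟨c, hc⟩ : ∃ c : ℂ, q0.eval c ≠ 0 := by
      by_contra h
      push_neg at h
      exact hq0ne (Polynomial.zero_of_eval_zero _ h)
    intro hmem
    rw [Ideal.mem_span_singleton] at hmem
    obtain ⟨r, hr⟩ := hmem
    set φ : S →ₐ[ℂ] Polynomial ℂ := aeval ![Polynomial.C c, 0, Polynomial.X] with hφ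
    have h2 := congrArg (fun p => Polynomial.coeff (φ p) 2) hr
    simp only [map_mul, map_pow, map_sub, map_add, map_neg] at h2
    have hφT : φ T = Polynomial.X := by simp [hφ, T]
    have hφV : φ V = Polynomial.C c := by simp [hφ, V]
    have hφC : ∀ a : ℂ, φ (C a) = Polynomial.C a := by intro a; simp [hφ]
    rw [hφT, hφV, hφC, hφC, hφC] at h2
    have hL : (-(Polynomial.C (1/2 : ℂ)) * Polynomial.C c * Polynomial.X ^ 2
        + Polynomial.C (l1/2) * Polynomial.X ^ 2
        - Polynomial.C (l2/2) * Polynomial.C c ^ 2 * Polynomial.X ^ 2).coeff 2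
        = q0.eval c := by
      simp only [hq0, ← Polynomial.C_pow, ← Polynomial.C_mul, neg_mul, ← Polynomial.C_neg,
        Polynomial.coeff_sub, Polynomial.coeff_add, Polynomial.coeff_neg, Polynomial.coeff_C_mul,
        Polynomial.coeff_X_pow, Polynomial.eval_sub, Polynomial.eval_mul, Polynomial.eval_pow,
        Polynomial.eval_C, Polynomial.eval_X]
      norm_num
      ring
    rw [hL] at h2
    have hR : (Polynomial.X ^ 3 * φ r).coeff 2 = 0 := by
      rw [mul_comm, Polynomial.coeff_mul_X_pow']
      norm_num
    rw [hR] at h2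
    exact hc h2


end
end

section
/- Let p1, p6 ∈ ℂ[v,y] ⊂ S, q1, q6 ∈ ℂ[v] ⊂ S and k1, k6 ∈ ℂ. Set E1 = (−v²y² + p1·t)∂_y + q1·t·∂_v + k1·t·∂_t and E6 = p6·t·∂_y + (v + q6·t)∂_v + k6·t·∂_t. If [E1,E6] ≡ −2·E1 (mod t²), then k1 = 0. -/
open MvPolynomial

noncomputable section

/-- `D ≡ D' (mod t²)`. -/
def ModT2 (D D' : Derivation ℂ S S) : Prop :=
  ∀ i : Fin 3, (D - D') (X i) ∈ Ideal.span {T ^ 2}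

theorem bracket_E1_E6 (p1 p6 : MvPolynomial (Fin 2) ℂ) (q1 q6 : Polynomial ℂ) (k1 k6 : ℂ)
    (E1 E6 : Derivation ℂ S S)
    (hE1 : E1 = der (-V ^ 2 * Y ^ 2 + ι2 p1 * T) (ι1 q1 * T) (C k1 * T))
    (hE6 : E6 = der (ι2 p6 * T) (V + ι1 q6 * T) (C k6 * T))
    (h : ModT2 ⁅E1, E6⁆ ((-2 : ℂ) • E1)) : k1 = 0 := by
  have hT := h 2
  have hE1T : E1 T = C k1 * T := by
    rw [hE1]; show mkDerivation ℂ ![ι1 q1 * T, _, C k1 * T] (X 2) = _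
    rw [mkDerivation_X]; rfl
  have hE6T : E6 T = C k6 * T := by
    rw [hE6]; show mkDerivation ℂ ![V + ι1 q6 * T, _, C k6 * T] (X 2) = _
    rw [mkDerivation_X]; rfl
  have hCk1 : ∀ (D : Derivation ℂ S S) (k : ℂ) (x : S), D (C k * x) = C k * D x := by
    intro D k x
    rw [D.leibniz, show (C k : S) = algebraMap ℂ S k from rfl, D.map_algebraMap,
      smul_zero, add_zero, smul_eq_mul]
  have key : (⁅E1, E6⁆ - (-2 : ℂ) • E1) T = C (2 * k1) * T := by
    rw [Derivation.sub_apply, Derivation.commutator_apply, hE1T, hE6T, hCk1, hCk1,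
      hE1T, hE6T, Derivation.smul_apply, hE1T]
    rw [show ((-2:ℂ) • (C k1 * T) : S) = (C (-2) : S) * (C k1 * T) by
      rw [smul_eq_C_mul]]
    simp only [map_mul, map_neg]
    ring
  have hT2 : (C (2 * k1) * T : S) ∈ Ideal.span {(T:S) ^ 2} := by
    rw [← key]; exact hT
  rw [Ideal.mem_span_singleton] at hT2
  obtain ⟨c, hc⟩ := hT2
  -- map to ℂ[X] via v,y ↦ 0, t ↦ X
  have := congrArg (aeval ![0, 0, (Polynomial.X : Polynomial ℂ)]) hc
  simp only [map_mul, map_pow, algHom_C, aeval_X] at this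
  have hTX : (aeval ![0, 0, (Polynomial.X : Polynomial ℂ)]) T = Polynomial.X := by
    show (aeval ![0, 0, (Polynomial.X : Polynomial ℂ)]) (X 2) = _
    simp
  rw [hTX] at this
  have h1 := congrArg (fun p => Polynomial.coeff p 1) this
  rw [mul_comm (Polynomial.X ^ 2)] at h1
  simp only [Polynomial.coeff_mul_X_pow'] at h1
  norm_num at h1
  simpa using h1

end
end

section
/- Let p3, p5 ∈ ℂ[v,y] ⊂ S, q3, q5 ∈ ℂ[v] ⊂ S and k3, k5 ∈ ℂ. Set E3 = p3·t·∂_y + (1 + q3·t)∂_v + k3·t·∂_t and E5 = (2y + p5·t)∂_y + (−v + q5·t)∂_v + k5·t·∂_t. If [E3,E5] ≡ −E3 (mod t²), then k3 = 0. -/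
open MvPolynomial

noncomputable section

theorem bracket_E3_E5 (p3 p5 : MvPolynomial (Fin 2) ℂ) (q3 q5 : Polynomial ℂ)
    (k3 k5 : ℂ) (E3 E5 : Derivation ℂ S S)
    (hE3 : E3 = der (ι2 p3 * T) (1 + ι1 q3 * T) (C k3 * T))
    (hE5 : E5 = der (2 * Y + ι2 p5 * T) (-V + ι1 q5 * T) (C k5 * T))
    (h : ModT2 ⁅E3, E5⁆ (-E3)) : k3 = 0 := by
  have hT : (⁅E3, E5⁆ - (-E3)) (X 2 : S) = C k3 * T := by
    have e3 : E3 (T : S) = C k3 * T := by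
      simp [hE3, der, T, MvPolynomial.mkDerivation_X]
    have e5 : E5 (T : S) = C k5 * T := by
      simp [hE5, der, T, MvPolynomial.mkDerivation_X]
    have hb : ⁅E3, E5⁆ (T : S) = E3 (E5 T) - E5 (E3 T) := rfl
    have : (X 2 : S) = T := rfl
    have s3 : E3 (C k5 * T) = C k5 * (C k3 * T) := by
      simp only [MvPolynomial.C_mul', Derivation.map_smul, e3]
    have s5 : E5 (C k3 * T) = C k3 * (C k5 * T) := by
      simp only [MvPolynomial.C_mul', Derivation.map_smul, e5]
    rw [this, Derivation.sub_apply, hb, e3, e5, s3, s5, Derivation.neg_apply, e3]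
    ring
  have hmem := h 2
  rw [hT] at hmem
  rw [Ideal.mem_span_singleton] at hmem
  -- map to ℂ[X] via aeval sending X 2 ↦ X, others ↦ 0
  have hdvd : (Polynomial.X : Polynomial ℂ) ^ 2 ∣ Polynomial.C k3 * Polynomial.X := by
    have := (aeval (fun i : Fin 3 => if i = 2 then (Polynomial.X : Polynomial ℂ) else 0)).toRingHom.map_dvd hmem
    simpa [T] using this
  have := (Polynomial.X_pow_dvd_iff.mp hdvd) 1 (by norm_num)
  simpa using this

end
end

section
/- Let p5, p7 ∈ ℂ[v,y] ⊂ S, q5, q7 ∈ ℂ[v] ⊂ S and k5, k7 ∈ ℂ. Set E5 = (2y + p5·t)∂_y + (−v + q5·t)∂_v + k5·t·∂_t and E7 = (2vy + p7·t)∂_y + (−v² + q7·t)∂_v + k7·t·∂_t. If [E5,E7] ≡ −E7 (mod t²), then k7 = 0. -/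
open MvPolynomial

noncomputable section

theorem bracket_E5_E7 (p5 p7 : MvPolynomial (Fin 2) ℂ) (q5 q7 : Polynomial ℂ)
    (k5 k7 : ℂ) (E5 E7 : Derivation ℂ S S)
    (hE5 : E5 = der (2 * Y + ι2 p5 * T) (-V + ι1 q5 * T) (C k5 * T))
    (hE7 : E7 = der (2 * V * Y + ι2 p7 * T) (-V ^ 2 + ι1 q7 * T) (C k7 * T))
    (h : ModT2 ⁅E5, E7⁆ (-E7)) : k7 = 0 := by
  have h2 := h 2
  have e5T : E5 T = C k5 * T := by
    rw [hE5]; show mkDerivation ℂ ![_,_,_] (X 2) = _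
    rw [mkDerivation_X]; rfl
  have e7T : E7 T = C k7 * T := by
    rw [hE7]; show mkDerivation ℂ ![_,_,_] (X 2) = _
    rw [mkDerivation_X]; rfl
  have key : (⁅E5, E7⁆ - (-E7)) (X 2) = C k7 * T := by
    have : (X 2 : S) = T := rfl
    rw [Derivation.sub_apply, Derivation.commutator_apply, this, e5T, e7T,
      Derivation.leibniz, Derivation.leibniz, e5T, e7T]
    have hc5 : E7 (C k5) = 0 := by
      have : (C k5 : S) = algebraMap ℂ S k5 := rfl
      rw [this, Derivation.map_algebraMap]
    have hc7 : E5 (C k7) = 0 := by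
      have : (C k7 : S) = algebraMap ℂ S k7 := rfl
      rw [this, Derivation.map_algebraMap]
    rw [hc5, hc7]
    simp only [Derivation.neg_apply, e7T, smul_eq_mul]
    ring
  rw [key] at h2
  rw [Ideal.mem_span_singleton] at h2
  obtain ⟨c, hc⟩ := h2
  have := congrArg (aeval ![(0:Polynomial ℂ), 0, Polynomial.X]) hc
  simp only [map_mul, map_pow, aeval_C, aeval_X, T] at this
  have hmat : (![(0:Polynomial ℂ), 0, Polynomial.X]) 2 = Polynomial.X := rfl
  rw [hmat] at this
  have := congrArg (fun p => Polynomial.coeff p 1) this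
  simp only [Polynomial.algebraMap_eq] at this
  rw [Polynomial.coeff_C_mul, Polynomial.coeff_X_one, mul_comm (Polynomial.X^2)] at this
  rw [Polynomial.coeff_mul_X_pow'] at this
  simpa using this

end
end

section
/- Let a1, b1, c1, a2, b2, c2, A1, A2, e1, e2 ∈ ℂ and set p1 = (a1·v² + b1·v + c1)·y² + (2·(1 − A1)·v + e1)·y and p2 = (a2·v² + b2·v + c2)·y² + (−2·A2·v + e2)·y in ℂ[v,y]. If −v²y²·∂_y p2 − 2y·p1 + y²·∂_y p1 + 2v²y·p2 + 2vy²·A1 = 0 in ℂ[v,y], then A2 = 0, e1 = 0, e2 = 0 and A1 = 1/2. -/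
open MvPolynomial

theorem constants_determined (a1 b1 c1 a2 b2 c2 A1 A2 e1 e2 : ℂ)
    (p1 p2 : MvPolynomial (Fin 2) ℂ)
    (hp1 : p1 = (C a1 * X 0 ^ 2 + C b1 * X 0 + C c1) * X 1 ^ 2 +
        (C (2 * (1 - A1)) * X 0 + C e1) * X 1)
    (hp2 : p2 = (C a2 * X 0 ^ 2 + C b2 * X 0 + C c2) * X 1 ^ 2 +
        (C (-2 * A2) * X 0 + C e2) * X 1)
    (h : -X 0 ^ 2 * X 1 ^ 2 * pderiv 1 p2 - 2 * X 1 * p1 + X 1 ^ 2 * pderiv 1 p1 +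
        2 * X 0 ^ 2 * X 1 * p2 + 2 * X 0 * X 1 ^ 2 * C A1 = 0) :
    A2 = 0 ∧ e1 = 0 ∧ e2 = 0 ∧ A1 = 1 / 2 := by
  have pd : ∀ q r s t u : ℂ, pderiv 1 ((C q * X 0 ^ 2 + C r * X 0 + C s) * X 1 ^ 2 +
      (C t * X 0 + C u) * X 1 : MvPolynomial (Fin 2) ℂ) =
      (C q * X 0 ^ 2 + C r * X 0 + C s) * (2 * X 1) + (C t * X 0 + C u) := by
    intro q r s t u
    simp [pderiv_mul, pderiv_X, Pi.single_eq_same, Pi.single_eq_of_ne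
      (by decide : (0 : Fin 2) ≠ 1)]
  rw [hp1, hp2, pd, pd] at h
  have k : ∀ v : ℂ, -2 * A2 * v ^ 3 + e2 * v ^ 2 + (4 * A1 - 2) * v - e1 = 0 := by
    intro v
    have := congrArg (eval ![v, 1]) h
    simp only [map_add, map_mul, map_neg, map_sub, map_pow, map_zero, eval_C, eval_X,
      map_ofNat, Matrix.cons_val_zero, Matrix.cons_val_one, Matrix.head_cons] at this
    linear_combination this
  have k0 := k 0
  have k1 := k 1
  have k2 := k (-1)
  have k3 := k 2
  refine ⟨?_, ?_, ?_, ?_⟩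
  · linear_combination (-1/4)*k0 + (1/4)*k1 + (1/12)*k2 + (-1/12)*k3
  · linear_combination -k0
  · linear_combination -k0 + (1/2)*k1 + (1/2)*k2
  · linear_combination (-1/8)*k0 + (1/4)*k1 + (-1/12)*k2 + (-1/24)*k3
end
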